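/- arXiv:0811.2696 — 2 statements merged into one kernel-verified Lean document; each statement's English description precedes it below -/
import Mathlib

section
/- Let I ⊆ ℝ^d be a finite nonempty set, let a : I → ℝ, and define g : ℝ^d → ℝ by g(v) = min_{w ∈ I} (⟨w, v⟩ − a(w)). Then for u ∈ ℝ^d, the function v ↦ ⟨u, v⟩ − g(v) is bounded below on ℝ^d if and only if u lies in the convex hull conv(I); moreover, when u ∈ conv(I), the infimum inf_{v ∈ ℝ^d} (⟨u, v⟩ − g(v)) is attained at some point of ℝ^d. -/
/-- The concave piecewise affine function `v ↦ min_{w ∈ I} (⟨w,v⟩ − a(w))`. -/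
noncomputable def tropMin {d : ℕ} (I : Finset (Fin d → ℝ)) (hI : I.Nonempty)
    (a : (Fin d → ℝ) → ℝ) (v : Fin d → ℝ) : ℝ :=
  I.inf' hI fun w => (∑ i, w i * v i) - a w
open Finset

/-- Continuity of a finite sup' of continuous real functions. -/
lemma continuous_sup'_aux {ι X : Type*} [TopologicalSpace X] {I : Finset ι} (hI : I.Nonempty)
    (g : ι → X → ℝ) (hg : ∀ w, Continuous (g w)) :
    Continuous fun v => I.sup' hI fun w => g w v := by
  induction hI using Finset.Nonempty.cons_induction with
  | singleton i => simpa using hg i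
  | cons i s hi hs ih => simpa only [Finset.sup'_cons hs] using (hg i).max ih

/-- Key attainment lemma: a finite max of affine functions on `ℝ^d`, bounded below,
attains its minimum. Induction on `d + I.card`. -/
lemma attain_aux {ι : Type*} : ∀ (n d : ℕ) (I : Finset ι) (hI : I.Nonempty)
    (c : ι → Fin d → ℝ) (a : ι → ℝ), d + I.card ≤ n →
    BddBelow (Set.range fun v : Fin d → ℝ => I.sup' hI fun w => (∑ i, c w i * v i) + a w) →
    ∃ v₀ : Fin d → ℝ, ∀ v : Fin d → ℝ,
      (I.sup' hI fun w => (∑ i, c w i * v₀ i) + a w)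
        ≤ I.sup' hI fun w => (∑ i, c w i * v i) + a w := by
  intro n
  induction n with
  | zero =>
    intro d I hI c a hn
    have := Finset.card_pos.mpr hI
    omega
  | succ n ih =>
    intro d I hI c a hn hbdd
    classical
    set F : (Fin d → ℝ) → ℝ := fun v => I.sup' hI fun w => (∑ i, c w i * v i) + a w with hF
    by_cases hd : d = 0
    · subst hd
      exact ⟨0, fun v => le_of_eq (congrArg F (Subsingleton.elim 0 v))⟩
    by_cases hcoer : ∀ e : Fin d → ℝ, e ≠ 0 → ∃ w ∈ I, 0 < ∑ i, c w i * e i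
    · -- coercive case
      have hFc : Continuous F := by
        apply continuous_sup'_aux hI
        intro w
        exact (continuous_finset_sum _ fun i _ => continuous_const.mul (continuous_apply i)).add
          continuous_const
      set φ : (Fin d → ℝ) → ℝ := fun e => I.sup' hI fun w => ∑ i, c w i * e i with hφ
      have hφc : Continuous φ := by
        apply continuous_sup'_aux hI
        intro w
        exact continuous_finset_sum _ fun i _ => continuous_const.mul (continuous_apply i)
      have hφscale : ∀ (r : ℝ), 0 ≤ r → ∀ x, φ (r • x) = r * φ x := by
        intro r hr x
        have h1 : φ (r • x) = I.sup' hI fun w => r * ∑ i, c w i * x i := by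
          rw [hφ]
          apply Finset.sup'_congr hI rfl
          intro w _
          rw [Finset.mul_sum]
          exact Finset.sum_congr rfl fun i _ => by
            simp only [Pi.smul_apply, smul_eq_mul]; ring
        rw [h1]
        exact (Finset.comp_sup'_eq_sup'_comp hI (fun y : ℝ => r * y)
          (fun p q => mul_max_of_nonneg p q hr)).symm
      haveI : Nontrivial (Fin d → ℝ) := by
        refine ⟨0, Pi.single ⟨0, Nat.pos_of_ne_zero hd⟩ 1, fun h => ?_⟩
        have := congrFun h ⟨0, Nat.pos_of_ne_zero hd⟩
        simp at this
      have hsph : (Metric.sphere (0 : Fin d → ℝ) 1).Nonempty :=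
        NormedSpace.sphere_nonempty.mpr zero_le_one
      obtain ⟨e₀, he₀mem, he₀min⟩ :=
        (isCompact_sphere (0 : Fin d → ℝ) 1).exists_isMinOn hsph hφc.continuousOn
      have he₀norm : ‖e₀‖ = 1 := by simpa using he₀mem
      have he₀ne : e₀ ≠ 0 := by
        intro h; rw [h] at he₀norm; simp at he₀norm
      obtain ⟨w₀, hw₀I, hw₀⟩ := hcoer e₀ he₀ne
      set ε : ℝ := φ e₀ with hε
      have hεpos : 0 < ε := by
        have h := Finset.le_sup' (fun w => ∑ i, c w i * e₀ i) hw₀I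
        exact lt_of_lt_of_le hw₀ h
      have hφlow : ∀ v : Fin d → ℝ, ε * ‖v‖ ≤ φ v := by
        intro v
        rcases eq_or_ne v 0 with rfl | hv
        · have h0 : φ (0 : Fin d → ℝ) = 0 := by
            have : φ (0 : Fin d → ℝ) = I.sup' hI fun _ => (0:ℝ) := by
              rw [hφ]
              apply Finset.sup'_congr hI rfl
              intro w _
              simp
            rw [this]
            exact Finset.sup'_const hI 0
          simp [h0]
        · have hvn : (0:ℝ) < ‖v‖ := norm_pos_iff.mpr hv
          have hmem : ‖v‖⁻¹ • v ∈ Metric.sphere (0 : Fin d → ℝ) 1 := by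
            simp [norm_smul, abs_of_pos (inv_pos.mpr hvn), inv_mul_cancel₀ hvn.ne']
          have h1 : ε ≤ φ (‖v‖⁻¹ • v) := he₀min hmem
          have h2 : φ v = ‖v‖ * φ (‖v‖⁻¹ • v) := by
            rw [← hφscale ‖v‖ hvn.le]
            congr 1
            rw [smul_smul, mul_inv_cancel₀ hvn.ne', one_smul]
          rw [h2]
          calc ε * ‖v‖ = ‖v‖ * ε := by ring
          _ ≤ ‖v‖ * φ (‖v‖⁻¹ • v) := mul_le_mul_of_nonneg_left h1 hvn.le
      set A : ℝ := I.inf' hI a with hA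
      have hFlow : ∀ v, φ v + A ≤ F v := by
        intro v
        obtain ⟨w₁, hw₁I, hw₁⟩ := I.exists_mem_eq_sup' hI (fun w => ∑ i, c w i * v i)
        have h3 : φ v + A ≤ (∑ i, c w₁ i * v i) + a w₁ := by
          have h4 : A ≤ a w₁ := Finset.inf'_le a hw₁I
          have h5 : φ v = ∑ i, c w₁ i * v i := hw₁
          linarith
        have h6 : ((∑ i, c w₁ i * v i) + a w₁ : ℝ) ≤ F v :=
          Finset.le_sup' (fun w => (∑ i, c w i * v i) + a w) hw₁I
        exact h3.trans h6
      set R : ℝ := (F 0 - A + 1) / ε with hR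
      have hF0 : A ≤ F 0 := by
        have h6 := hFlow 0
        have h0 : ε * ‖(0 : Fin d → ℝ)‖ ≤ φ 0 := hφlow 0
        simp only [norm_zero, mul_zero] at h0
        linarith
      have hRpos : 0 < R := div_pos (by linarith) hεpos
      obtain ⟨v₀, hv₀mem, hv₀min⟩ := (isCompact_closedBall (0 : Fin d → ℝ) R).exists_isMinOn
        ⟨0, Metric.mem_closedBall_self hRpos.le⟩ hFc.continuousOn
      refine ⟨v₀, fun v => ?_⟩
      rcases le_or_gt ‖v‖ R with hvR | hvR
      · have : F v₀ ≤ F v := hv₀min (by simpa [Metric.mem_closedBall] using hvR)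
        exact this
      · have h1 : F v₀ ≤ F 0 := hv₀min (Metric.mem_closedBall_self hRpos.le)
        have h2 : ε * R < ε * ‖v‖ := mul_lt_mul_of_pos_left hvR hεpos
        have h3 : ε * R = F 0 - A + 1 := by
          rw [hR, mul_div_cancel₀ _ hεpos.ne']
        have h4 := hφlow v
        have h5 := hFlow v
        show F v₀ ≤ F v
        linarith
    · push_neg at hcoer
      obtain ⟨e, he0, hsep⟩ := hcoer
      set s : ι → ℝ := fun w => ∑ i, c w i * e i with hs
      have key : ∀ (v : Fin d → ℝ) (t : ℝ),
          F (v + t • e) = I.sup' hI fun w => ((∑ i, c w i * v i) + a w) + t * s w := by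
        intro v t
        rw [hF]
        apply Finset.sup'_congr hI rfl
        intro w _
        have h7 : ∑ i, c w i * (v + t • e) i
            = (∑ i, c w i * v i) + t * ∑ i, c w i * e i := by
          rw [Finset.mul_sum, ← Finset.sum_add_distrib]
          exact Finset.sum_congr rfl fun i _ => by
            simp only [Pi.add_apply, Pi.smul_apply, smul_eq_mul]; ring
        rw [h7, hs]; ring
      set Z : Finset ι := I.filter (fun w => s w = 0) with hZ
      by_cases hZne : Z.Nonempty
      · by_cases hZI : Z = I
        · -- all slopes zero: dimension reduction
          have slopes0 : ∀ w ∈ I, s w = 0 := by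
            intro w hw
            rw [← hZI] at hw
            exact (Finset.mem_filter.mp hw).2
          have Finv : ∀ (v : Fin d → ℝ) (t : ℝ), F (v + t • e) = F v := by
            intro v t
            rw [key, hF]
            apply Finset.sup'_congr hI rfl
            intro w hw
            rw [slopes0 w hw]; ring
          obtain ⟨m, rfl⟩ : ∃ m, d = m + 1 := ⟨d - 1, by omega⟩
          obtain ⟨i₀, hi₀⟩ : ∃ i, e i ≠ 0 := by
            by_contra h
            push_neg at h
            exact he0 (funext fun i => h i)
          set c' : ι → Fin m → ℝ := fun w j => c w (i₀.succAbove j) with hc'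
          set L : (Fin m → ℝ) → (Fin (m+1) → ℝ) := fun x => i₀.insertNth 0 x with hL
          have sumL : ∀ (w : ι) (x : Fin m → ℝ),
              (∑ i, c w i * L x i) = ∑ j, c' w j * x j := by
            intro w x
            rw [Fin.sum_univ_succAbove (fun i => c w i * L x i) i₀]
            simp [hL, hc', Fin.insertNth_apply_same, Fin.insertNth_apply_succAbove]
          set G : (Fin m → ℝ) → ℝ := fun x => I.sup' hI fun w => (∑ j, c' w j * x j) + a w
            with hG
          have hGF : ∀ x, G x = F (L x) := by
            intro x
            rw [hG, hF]
            apply Finset.sup'_congr hI rfl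
            intro w _
            rw [sumL]
          have hGbdd : BddBelow (Set.range G) := by
            apply hbdd.mono
            rintro _ ⟨x, rfl⟩
            exact ⟨L x, (hGF x).symm⟩
          obtain ⟨x₀, hx₀⟩ := ih m I hI c' a (by omega) hGbdd
          have hx₀' : ∀ y, G x₀ ≤ G y := hx₀
          refine ⟨L x₀, fun v => ?_⟩
          set t : ℝ := v i₀ / e i₀ with ht
          have hvi₀ : (v - t • e) i₀ = 0 := by
            simp only [Pi.sub_apply, Pi.smul_apply, smul_eq_mul, ht]
            rw [div_mul_cancel₀ _ hi₀, sub_self]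
          have hvL : v - t • e = L (i₀.removeNth (v - t • e)) := by
            rw [hL]
            conv_lhs => rw [← Fin.insertNth_self_removeNth i₀ (v - t • e)]
            rw [hvi₀]
          have h5 : F v = F (v - t • e) := by
            conv_lhs => rw [show v = (v - t • e) + t • e by abel]
            exact Finv _ t
          show F (L x₀) ≤ F v
          calc F (L x₀) = G x₀ := (hGF x₀).symm
          _ ≤ G (i₀.removeNth (v - t • e)) := hx₀' _
          _ = F (L (i₀.removeNth (v - t • e))) := hGF _
          _ = F (v - t • e) := by rw [← hvL]
          _ = F v := h5.symm
        · -- some slope strictly negative : reduce number of pieces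
          have hZsub : Z ⊆ I := Finset.filter_subset _ _
          have hZcard : Z.card < I.card :=
            Finset.card_lt_card (ssubset_of_ne_of_subset hZI hZsub)
          set FZ : (Fin d → ℝ) → ℝ := fun v => Z.sup' hZne fun w => (∑ i, c w i * v i) + a w
            with hFZ
          have hex : ∀ v : Fin d → ℝ, ∃ t : ℝ, F (v + t • e) = FZ v := by
            intro v
            set p : ι → ℝ := fun w => (∑ i, c w i * v i) + a w with hp
            set T : ℝ := 1 + I.sup' hI (fun w => (p w - FZ v) / (- s w)) with hT
            refine ⟨T, ?_⟩
            rw [key]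
            apply le_antisymm
            · apply Finset.sup'_le
              intro w hw
              rcases eq_or_lt_of_le (hsep w hw) with hsw | hsw
              · have hsw0 : s w = 0 := hsw
                have hwZ : w ∈ Z := by
                  rw [hZ]
                  exact Finset.mem_filter.mpr ⟨hw, hsw0⟩
                have hple : p w ≤ FZ v := Finset.le_sup' p hwZ
                show p w + T * s w ≤ FZ v
                rw [hsw0]
                simpa using hple
              · have hTw : (p w - FZ v) / (- s w) < T := by
                  rw [hT]
                  have := Finset.le_sup' (fun w => (p w - FZ v) / (- s w)) hw
                  linarith
                have h8 : p w - FZ v < T * (- s w) := by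
                  rw [div_lt_iff₀ (by linarith)] at hTw
                  linarith
                show p w + T * s w ≤ FZ v
                linarith
            · obtain ⟨w₂, hw₂Z, hw₂⟩ := Z.exists_mem_eq_sup' hZne p
              have hw₂s : s w₂ = 0 := by
                have h11 : w₂ ∈ I.filter (fun w => s w = 0) := hZ ▸ hw₂Z
                exact (Finset.mem_filter.mp h11).2
              have h9 : FZ v = p w₂ + T * s w₂ := by rw [hw₂s]; simpa using hw₂
              rw [h9]
              exact Finset.le_sup' (fun w => p w + T * s w) (hZsub hw₂Z)
          have hFZbdd : BddBelow (Set.range FZ) := by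
            obtain ⟨b, hb⟩ := hbdd
            refine ⟨b, ?_⟩
            rintro _ ⟨v, rfl⟩
            obtain ⟨t, htv⟩ := hex v
            rw [← htv]
            exact hb ⟨v + t • e, rfl⟩
          obtain ⟨x₀, hx₀⟩ := ih d Z hZne c a (by omega) hFZbdd
          have hx₀' : ∀ y, FZ x₀ ≤ FZ y := hx₀
          obtain ⟨t₀, ht₀⟩ := hex x₀
          refine ⟨x₀ + t₀ • e, fun v => ?_⟩
          have h1 : FZ v ≤ F v := by
            apply Finset.sup'_le
            intro w hw
            exact Finset.le_sup' (fun w => (∑ i, c w i * v i) + a w) (hZsub hw)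
          show F (x₀ + t₀ • e) ≤ F v
          calc F (x₀ + t₀ • e) = FZ x₀ := ht₀
          _ ≤ FZ v := hx₀' v
          _ ≤ F v := h1
      · -- all slopes strictly negative : unbounded below, contradiction
        exfalso
        have hneg : ∀ w ∈ I, s w < 0 := by
          intro w hw
          rcases eq_or_lt_of_le (hsep w hw) with h | h
          · have h0 : s w = 0 := h
            have hwZ : w ∈ Z := by
              rw [hZ]
              exact Finset.mem_filter.mpr ⟨hw, h0⟩
            exact absurd hwZ (fun hh => hZne ⟨w, hh⟩)
          · exact h
        obtain ⟨b, hb⟩ := hbdd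
        set T : ℝ := 1 + I.sup' hI
          (fun w => (((∑ i, c w i * (0:Fin d → ℝ) i) + a w) - b) / (- s w)) with hT
        have hcontr : F ((0 : Fin d → ℝ) + T • e) < b := by
          rw [key]
          apply (Finset.sup'_lt_iff hI).mpr
          intro w hw
          set pw : ℝ := (∑ i, c w i * (0:Fin d → ℝ) i) + a w with hpw
          have hTw : (pw - b) / (- s w) < T := by
            rw [hT]
            have := Finset.le_sup'
              (fun w => (((∑ i, c w i * (0:Fin d → ℝ) i) + a w) - b) / (- s w)) hw
            rw [hpw]
            linarith
          have h10 : pw - b < T * (- s w) := by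
            rw [div_lt_iff₀ (by linarith [hneg w hw])] at hTw
            linarith
          show pw + T * s w < b
          linarith
        exact absurd (hb ⟨(0 : Fin d → ℝ) + T • e, rfl⟩) (not_le.mpr hcontr)
/-- Rewriting the objective as a finite max of affine functions. -/
lemma objective_eq {d : ℕ} (I : Finset (Fin d → ℝ)) (hI : I.Nonempty)
    (a : (Fin d → ℝ) → ℝ) (u v : Fin d → ℝ) :
    (∑ i, u i * v i) - tropMin I hI a v
      = I.sup' hI (fun w => (∑ i, (u i - w i) * v i) + a w) := by
  obtain ⟨w0, hw0, h0⟩ := I.exists_mem_eq_inf' hI (fun w => (∑ i, w i * v i) - a w)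
  have hsplit : ∀ w : Fin d → ℝ,
      (∑ i, (u i - w i) * v i) = (∑ i, u i * v i) - (∑ i, w i * v i) := by
    intro w
    rw [← Finset.sum_sub_distrib]
    exact Finset.sum_congr rfl fun i _ => by ring
  apply le_antisymm
  · rw [tropMin, h0]
    have h1 : (∑ i, u i * v i) - ((∑ i, w0 i * v i) - a w0)
        = (∑ i, (u i - w0 i) * v i) + a w0 := by rw [hsplit]; ring
    rw [h1]
    exact Finset.le_sup' (fun w => (∑ i, (u i - w i) * v i) + a w) hw0
  · apply Finset.sup'_le
    intro w hw
    have h1 : tropMin I hI a v ≤ (∑ i, w i * v i) - a w := Finset.inf'_le _ hw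
    rw [hsplit]
    linarith

/-- `v ↦ ⟨u,v⟩ − g(v)` is bounded below iff `u ∈ conv(I)`, and for `u ∈ conv(I)`
the infimum is attained. -/
theorem bddBelow_sub_tropMin_iff_mem_convexHull
    (d : ℕ) (I : Finset (Fin d → ℝ)) (hI : I.Nonempty) (a : (Fin d → ℝ) → ℝ)
    (u : Fin d → ℝ) :
    (BddBelow (Set.range fun v : Fin d → ℝ => (∑ i, u i * v i) - tropMin I hI a v) ↔
      u ∈ convexHull ℝ (I : Set (Fin d → ℝ))) ∧
    (u ∈ convexHull ℝ (I : Set (Fin d → ℝ)) →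
      ∃ v₀ : Fin d → ℝ, ∀ v : Fin d → ℝ,
        (∑ i, u i * v₀ i) - tropMin I hI a v₀ ≤ (∑ i, u i * v i) - tropMin I hI a v) := by
  classical
  have heq : ∀ v, (∑ i, u i * v i) - tropMin I hI a v
      = I.sup' hI (fun w => (∑ i, (u i - w i) * v i) + a w) := objective_eq I hI a u
  -- direction: u ∈ conv I → bounded below
  have hmpr : u ∈ convexHull ℝ (I : Set (Fin d → ℝ)) →
      BddBelow (Set.range fun v : Fin d → ℝ => (∑ i, u i * v i) - tropMin I hI a v) := by
    intro hu
    obtain ⟨lam, hlam0, hlam1, hlamu⟩ := Finset.mem_convexHull'.mp hu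
    refine ⟨∑ y ∈ I, lam y * a y, ?_⟩
    rintro _ ⟨v, rfl⟩
    have hui : ∀ i, u i = ∑ y ∈ I, lam y * y i := by
      intro i
      rw [← hlamu]
      simp only [Finset.sum_apply, Pi.smul_apply, smul_eq_mul]
    have huv : (∑ i, u i * v i) = ∑ y ∈ I, lam y * ∑ i, y i * v i := by
      calc (∑ i, u i * v i) = ∑ i, (∑ y ∈ I, lam y * y i) * v i :=
            Finset.sum_congr rfl fun i _ => by rw [← hui i]
      _ = ∑ i, ∑ y ∈ I, lam y * y i * v i :=
            Finset.sum_congr rfl fun i _ => by rw [Finset.sum_mul]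
      _ = ∑ y ∈ I, ∑ i, lam y * y i * v i := Finset.sum_comm
      _ = ∑ y ∈ I, lam y * ∑ i, y i * v i := by
            refine Finset.sum_congr rfl fun y _ => ?_
            rw [Finset.mul_sum]
            exact Finset.sum_congr rfl fun i _ => by ring
    have hg : ∀ y ∈ I, tropMin I hI a v ≤ (∑ i, y i * v i) - a y :=
      fun y hy => Finset.inf'_le _ hy
    have hT : tropMin I hI a v = ∑ y ∈ I, lam y * tropMin I hI a v := by
      rw [← Finset.sum_mul, hlam1, one_mul]
    show ∑ y ∈ I, lam y * a y ≤ (∑ i, u i * v i) - tropMin I hI a v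
    rw [huv]
    calc ∑ y ∈ I, lam y * a y
        ≤ ∑ y ∈ I, lam y * ((∑ i, y i * v i) - tropMin I hI a v) := by
          apply Finset.sum_le_sum
          intro y hy
          have h2 := hg y hy
          exact mul_le_mul_of_nonneg_left (by linarith) (hlam0 y hy)
    _ = (∑ y ∈ I, lam y * ∑ i, y i * v i) - ∑ y ∈ I, lam y * tropMin I hI a v := by
          rw [← Finset.sum_sub_distrib]
          exact Finset.sum_congr rfl fun y _ => by ring
    _ = (∑ y ∈ I, lam y * ∑ i, y i * v i) - tropMin I hI a v := by rw [← hT]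
  -- direction: bounded below → u ∈ conv I
  have hmp : BddBelow (Set.range fun v : Fin d → ℝ => (∑ i, u i * v i) - tropMin I hI a v) →
      u ∈ convexHull ℝ (I : Set (Fin d → ℝ)) := by
    intro hbdd
    by_contra hu
    have hcl : IsClosed (convexHull ℝ (I : Set (Fin d → ℝ))) :=
      (I.finite_toSet.isCompact_convexHull (𝕜 := ℝ)).isClosed
    obtain ⟨f, s0, hfw, hsu⟩ :=
      geometric_hahn_banach_closed_point (convex_convexHull ℝ _) hcl hu
    set p : Fin d → ℝ := fun i => f (fun j => if i = j then 1 else 0) with hp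
    have flin : ∀ x : Fin d → ℝ, f x = ∑ i, x i * p i := by
      intro x
      conv_lhs => rw [pi_eq_sum_univ x]
      rw [map_sum]
      refine Finset.sum_congr rfl fun i _ => ?_
      rw [map_smul]
      simp [hp, smul_eq_mul]
    set δ : ℝ := f u - s0 with hδ
    have hδpos : 0 < δ := by rw [hδ]; linarith [hsu]
    have hfw' : ∀ w ∈ I, δ ≤ f u - f w := by
      intro w hw
      have h3 : f w < s0 := hfw w (subset_convexHull ℝ _ (by exact_mod_cast hw))
      rw [hδ]; linarith
    obtain ⟨b, hb⟩ := hbdd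
    set Am : ℝ := I.sup' hI a with hAm
    set t : ℝ := min 0 ((b - Am - 1) / δ) with htdef
    have ht0 : t ≤ 0 := min_le_left _ _
    have htb : t * δ ≤ b - Am - 1 := by
      have h4 : t ≤ (b - Am - 1) / δ := min_le_right _ _
      exact (le_div_iff₀ hδpos).mp h4
    have hpiece : ∀ w : Fin d → ℝ, (∑ i, (u i - w i) * (t • p) i) = t * (f u - f w) := by
      intro w
      rw [flin u, flin w, ← Finset.sum_sub_distrib, Finset.mul_sum]
      exact Finset.sum_congr rfl fun i _ => by
        simp only [Pi.smul_apply, smul_eq_mul]; ring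
    have hlt : (∑ i, u i * (t • p) i) - tropMin I hI a (t • p) < b := by
      rw [heq (t • p)]
      apply (Finset.sup'_lt_iff hI).mpr
      intro w hw
      rw [hpiece w]
      have h5 : δ ≤ f u - f w := hfw' w hw
      have h6 : t * (f u - f w) ≤ t * δ := by nlinarith
      have h7 : a w ≤ Am := Finset.le_sup' a hw
      linarith
    exact absurd (hb ⟨t • p, rfl⟩) (not_le.mpr hlt)
  refine ⟨⟨hmp, hmpr⟩, fun hu => ?_⟩
  have hbdd := hmpr hu
  have hbdd2 : BddBelow (Set.range fun v : Fin d → ℝ =>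
      I.sup' hI fun w => (∑ i, (u i - w i) * v i) + a w) := by
    have hfe : (fun v : Fin d → ℝ => (∑ i, u i * v i) - tropMin I hI a v)
        = fun v => I.sup' hI fun w => (∑ i, (u i - w i) * v i) + a w := funext heq
    rwa [hfe] at hbdd
  obtain ⟨v₀, hv₀⟩ := attain_aux (d + I.card) d I hI (fun w i => u i - w i) a le_rfl hbdd2
  refine ⟨v₀, fun v => ?_⟩
  rw [heq v₀, heq v]
  exact hv₀ v
end

section
/- Let 𝔽_q be a finite field with q elements, let m ≥ 1, let r_1, …, r_m be natural numbers with r_i ≤ q − 1 for all i, and let ũ ∈ ℤ^m. Then there exists a family of coefficients c : ℤ^m → 𝔽_q, not all zero, supported on the lattice box ũ + ∏_{i=1}^m {0, 1, …, r_i}, such that the function f : ((𝔽_q)ˣ)^m → 𝔽_q defined by f(x) = Σ_u c_u x^u (where x^u := ∏_i x_i^{u_i}) is nonzero at exactly ∏_{i=1}^m (q − 1 − r_i) points of ((𝔽_q)ˣ)^m; equivalently, f vanishes at exactly Σ_{j=1}^m (−1)^{j+1} Σ_{1 ≤ i_1 < … < i_j ≤ m} r_{i_1} ⋯ r_{i_j}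 (q−1)^{m−j} points of the torus. In particular, any linear evaluation code over ((𝔽_q)ˣ)^m whose function space contains all Laurent monomials x^u with u in the box ũ + ∏_i {0,…,r_i} has minimum Hamming distance at most ∏_{i=1}^m (q − 1 − r_i). -/
open Finset Polynomial

private lemma sum_Icc_int {F : Type} [Field F] (a : ℤ) (rr : ℕ) (f : ℤ → F) :
    ∑ n ∈ Finset.Icc a (a + (rr : ℤ)), f n = ∑ k ∈ Finset.range (rr + 1), f (a + (k : ℤ)) := by
  refine Finset.sum_nbij' (fun n => (n - a).toNat) (fun k => a + (k : ℤ)) ?_ ?_ ?_ ?_ ?_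
  · intro n hn; simp only [Finset.mem_Icc] at hn; simp only [Finset.mem_range]; omega
  · intro k hk; simp only [Finset.mem_range] at hk; simp only [Finset.mem_Icc]; omega
  · intro n hn; simp only [Finset.mem_Icc] at hn; omega
  · intro k hk; simp only [Finset.mem_range] at hk; omega
  · intro n hn; simp only [Finset.mem_Icc] at hn
    congr 1; omega

/-- Core counting construction for the upper bound on the minimum distance of `T`-codes:
over a finite field with `q` elements there is a nonzero family of coefficients supported
on the lattice box `ũ + ∏_i {0,…,r_i}` whose associated Laurent polynomial is nonzero at
exactly `∏_i (q − 1 − r_i)` points of the torus `((𝔽_q)ˣ)^m`. -/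
theorem exists_laurent_poly_supported_on_box_with_exact_nonvanishing_count
    (F : Type) [Field F] [Fintype F] (q : ℕ) (hq : Fintype.card F = q)
    (m : ℕ) (hm : 1 ≤ m) (r : Fin m → ℕ) (hr : ∀ i, r i ≤ q - 1)
    (ut : Fin m → ℤ) :
    ∃ c : (Fin m → ℤ) → F,
      c ≠ 0 ∧
      (∀ u : Fin m → ℤ, u ∉ Finset.Icc ut (fun i => ut i + (r i : ℤ)) → c u = 0) ∧
      Nat.card {x : Fin m → Fˣ //
          (∑ u ∈ Finset.Icc ut (fun i => ut i + (r i : ℤ)),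
            c u * ((∏ i, (x i) ^ (u i) : Fˣ) : F)) ≠ 0} =
        ∏ i, (q - 1 - r i) := by
  classical
  have hcard : ∀ i, r i ≤ Fintype.card Fˣ := by
    intro i; rw [Fintype.card_units, hq]; exact hr i
  have hS : ∀ i, ∃ t : Finset Fˣ, t ⊆ Finset.univ ∧ t.card = r i := fun i =>
    Finset.exists_subset_card_eq (by simpa using hcard i)
  choose S _ hScard using hS
  set p : Fin m → Polynomial F := fun i => ∏ η ∈ S i, (X - C (η : F)) with hp
  have hpdeg : ∀ i, (p i).natDegree = r i := by
    intro i
    rw [hp]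
    rw [Polynomial.natDegree_prod _ _ (fun η _ => X_sub_C_ne_zero _)]
    simp [hScard]
  have hmonic : ∀ i, (p i).Monic := fun i =>
    monic_prod_of_monic _ _ fun η _ => monic_X_sub_C _
  set c : (Fin m → ℤ) → F := fun u => ∏ i,
    (if u i ∈ Finset.Icc (ut i) (ut i + (r i : ℤ)) then (p i).coeff ((u i - ut i).toNat) else 0)
    with hc
  have hIcc : Finset.Icc ut (fun i => ut i + (r i : ℤ)) =
      Fintype.piFinset fun i => Finset.Icc (ut i) (ut i + (r i : ℤ)) := rfl
  refine ⟨c, ?_, ?_, ?_⟩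
  · intro h0
    have h1 : c (fun i => ut i + (r i : ℤ)) = 0 := by rw [h0]; rfl
    rw [hc] at h1
    simp only [Finset.mem_Icc, le_refl, and_true, le_add_iff_nonneg_right, Int.natCast_nonneg,
      if_true, if_pos] at h1
    have h2 : ∀ i : Fin m, (p i).coeff ((ut i + (r i : ℤ) - ut i).toNat) = 1 := by
      intro i
      have : (ut i + (r i : ℤ) - ut i).toNat = r i := by omega
      rw [this, ← hpdeg i]
      exact (hmonic i).coeff_natDegree
    rw [Finset.prod_congr rfl (fun i _ => h2 i)] at h1
    simp at h1
  · intro u hu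
    rw [hIcc, Fintype.mem_piFinset] at hu
    push_neg at hu
    obtain ⟨i, hi⟩ := hu
    exact Finset.prod_eq_zero (Finset.mem_univ i) (by rw [if_neg hi])
  · have key : ∀ x : Fin m → Fˣ,
        (∑ u ∈ Finset.Icc ut (fun i => ut i + (r i : ℤ)),
          c u * ((∏ i, (x i) ^ (u i) : Fˣ) : F)) ≠ 0 ↔ ∀ i, x i ∉ S i := by
      intro x
      have hsum : (∑ u ∈ Finset.Icc ut (fun i => ut i + (r i : ℤ)),
          c u * ((∏ i, (x i) ^ (u i) : Fˣ) : F)) =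
          ∏ i, (((x i : F)) ^ (ut i) * (p i).eval (x i : F)) := by
        have step1 : ∀ u : Fin m → ℤ, c u * ((∏ i, (x i) ^ (u i) : Fˣ) : F) =
            ∏ i, ((if u i ∈ Finset.Icc (ut i) (ut i + (r i : ℤ)) then
              (p i).coeff ((u i - ut i).toNat) else 0) * ((x i : F)) ^ (u i)) := by
          intro u
          rw [hc, Finset.prod_mul_distrib]
          congr 1
          push_cast
          rfl
        rw [Finset.sum_congr rfl (fun u _ => step1 u), hIcc]
        have hps := Finset.prod_univ_sum (fun i => Finset.Icc (ut i) (ut i + (r i : ℤ)))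
          (fun i n => (if n ∈ Finset.Icc (ut i) (ut i + (r i : ℤ)) then
            (p i).coeff ((n - ut i).toNat) else 0) * ((x i : F)) ^ n)
        rw [← hps]
        refine Finset.prod_congr rfl fun i _ => ?_
        rw [Finset.sum_congr rfl (fun n hn => by rw [if_pos hn]), sum_Icc_int (ut i) (r i)]
        have heval : (p i).eval (x i : F) =
            ∑ k ∈ Finset.range (r i + 1), (p i).coeff k * (x i : F) ^ k :=
          Polynomial.eval_eq_sum_range' (by rw [hpdeg i]; omega) _
        rw [heval, Finset.mul_sum]
        refine Finset.sum_congr rfl fun k _ => ?_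
        have hx : (x i : F) ≠ 0 := Units.ne_zero _
        have hz : ((x i : F)) ^ (ut i + (k : ℤ)) = ((x i : F)) ^ (ut i) * ((x i : F)) ^ k := by
          rw [zpow_add₀ hx, zpow_natCast]
        have harg : (ut i + (k : ℤ) - ut i).toNat = k := by omega
        rw [harg, hz]
        ring
      rw [hsum, Finset.prod_ne_zero_iff]
      have heq : ∀ i, ((x i : F)) ^ (ut i) * (p i).eval (x i : F) ≠ 0 ↔ x i ∉ S i := by
        intro i
        rw [mul_ne_zero_iff]
        have h1 : ((x i : F)) ^ (ut i) ≠ 0 := zpow_ne_zero _ (Units.ne_zero _)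
        rw [and_iff_right h1]
        rw [hp]
        simp only [Polynomial.eval_prod, Polynomial.eval_sub, Polynomial.eval_X,
          Polynomial.eval_C, Finset.prod_ne_zero_iff, sub_ne_zero]
        constructor
        · intro h hmem
          exact (h _ hmem) rfl
        · intro h η hη hcontra
          exact h ((Units.ext hcontra) ▸ hη)
      constructor
      · intro h i; exact (heq i).mp (h i (Finset.mem_univ i))
      · intro h i _; exact (heq i).mpr (h i)
    rw [Nat.card_congr (Equiv.subtypeEquivRight key), Nat.card_eq_fintype_card,
      Fintype.card_subtype]
    have hfilter : (Finset.univ.filter fun x : Fin m → Fˣ => ∀ i, x i ∉ S i) =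
        Fintype.piFinset fun i => (S i)ᶜ := by
      ext x; simp [Fintype.mem_piFinset]
    rw [hfilter, Fintype.card_piFinset]
    refine Finset.prod_congr rfl fun i _ => ?_
    rw [Finset.card_compl, hScard, Fintype.card_units, hq]
end
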